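/- For any nonnegative integer m and positive integer n, applying m times the operator P_q (where (P_q f)(x) = ∫_0^x f(t)/t d_q t is the Jackson integral) to the function 1 - (x;q)_n gives (1-q)^m ∑_{i=1}^n (1 - (x q^{-m};q)_i) · q^i/(1-q^i) · h_{m-1}(q^i/(1-q^i), q^{i+1}/(1-q^{i+1}), ..., q^n/(1-q^n)). -/

import Mathlib

noncomputable def qPoch (q a : ℝ) (n : ℕ) : ℝ := ∏ j ∈ Finset.range n, (1 - a * q ^ j)

/-- Complete homogeneous symmetric polynomial `h_k` of the entries of a list. -/
noncomputable def hPoly : List ℝ → ℕ → ℝ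
  | _, 0 => 1
  | [], _ + 1 => 0
  | a :: as, k + 1 => a * hPoly (a :: as) k + hPoly as (k + 1)
termination_by l k => (l.length, k)

/-- The list `[f i, f (i+1), …, f n]`. -/
def varList (f : ℕ → ℝ) (i n : ℕ) : List ℝ := (List.range (n + 1 - i)).map fun j => f (i + j)

/-- The Jackson definite integral `∫_0^x f(t) d_q t`. -/
noncomputable def jInt (q x : ℝ) (f : ℝ → ℝ) : ℝ := (1 - q) * ∑' k : ℕ, q ^ k * x * f (q ^ k * x)

/-- The operator `(P_q f)(x) = ∫_0^x f(t)/t d_q t`. -/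
noncomputable def Pq (q : ℝ) (f : ℝ → ℝ) : ℝ → ℝ := fun x => jInt q x fun t => f t / t

open Finset Filter Topology

section Lemmas

lemma qPoch_succ (q a : ℝ) (i : ℕ) : qPoch q a (i+1) = qPoch q a i * (1 - a * q ^ i) :=
  Finset.prod_range_succ _ _

lemma qPoch_succ' (q a : ℝ) (i : ℕ) : qPoch q a (i+1) = (1 - a) * qPoch q (q * a) i := by
  rw [qPoch, Finset.prod_range_succ', qPoch]
  simp [mul_comm, pow_succ, mul_assoc, mul_left_comm]

lemma qPoch_zero_left (q : ℝ) (i : ℕ) : qPoch q 0 i = 1 := by simp [qPoch]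

lemma qPoch_diff (q y : ℝ) (i : ℕ) :
    qPoch q (q * y) (i + 1) - qPoch q y (i + 1) = qPoch q (q * y) i * y * (1 - q ^ (i+1)) := by
  rw [qPoch_succ, qPoch_succ']
  ring_nf

lemma abs_qPoch_le {q y B : ℝ} (hq0 : 0 ≤ q) (hq1 : q ≤ 1) (hy : |y| ≤ B) (i : ℕ) :
    |qPoch q y i| ≤ (1 + B) ^ i := by
  have hB : 0 ≤ B := le_trans (abs_nonneg y) hy
  rw [qPoch, Finset.abs_prod]
  calc ∏ j ∈ Finset.range i, |1 - y * q ^ j| ≤ ∏ j ∈ Finset.range i, (1 + B) := by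
        apply Finset.prod_le_prod (fun j _ => abs_nonneg _)
        intro j _
        calc |1 - y * q ^ j| ≤ |1| + |y * q ^ j| := abs_sub _ _
          _ ≤ 1 + B := by
            rw [abs_one, abs_mul, abs_pow, abs_of_nonneg hq0]
            have h1 : q ^ j ≤ 1 := pow_le_one₀ hq0 hq1
            have h2 : |y| * q ^ j ≤ B * 1 :=
              mul_le_mul hy h1 (pow_nonneg hq0 j) hB
            linarith
    _ = (1 + B) ^ i := by rw [Finset.prod_const, Finset.card_range]

lemma tendsto_qPoch {q : ℝ} (hq0 : 0 ≤ q) (hq1 : q < 1) (y : ℝ) (i : ℕ) :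
    Tendsto (fun k : ℕ => qPoch q (q ^ k * y) i) atTop (𝓝 1) := by
  have h1 : Tendsto (fun k : ℕ => q ^ k) atTop (𝓝 0) :=
    tendsto_pow_atTop_nhds_zero_of_lt_one hq0 hq1
  have : Tendsto (fun k : ℕ => ∏ j ∈ Finset.range i, (1 - (q ^ k * y) * q ^ j)) atTop
      (𝓝 (∏ j ∈ Finset.range i, (1 - (0 * y) * q ^ j))) := by
    apply tendsto_finset_prod
    intro j _
    exact (tendsto_const_nhds.sub (((h1.mul_const y).mul_const (q ^ j)))).congr (fun k => rfl)
  simpa [qPoch] using this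

lemma summable_aux {q : ℝ} (hq0 : 0 ≤ q) (hq1 : q < 1) (x : ℝ) (i : ℕ) :
    Summable (fun k : ℕ => qPoch q (q ^ k * x) i * (q ^ k * x)) := by
  apply Summable.of_norm_bounded (g := fun k : ℕ => ((1 + |x|) ^ i * |x|) * q ^ k)
  · exact (summable_geometric_of_lt_one hq0 hq1).mul_left _
  · intro k
    rw [Real.norm_eq_abs, abs_mul, abs_mul, abs_pow, abs_of_nonneg hq0]
    have h1 : |q ^ k * x| ≤ |x| := by
      rw [abs_mul, abs_pow, abs_of_nonneg hq0]
      nlinarith [abs_nonneg x, pow_le_one₀ hq0 hq1.le (n := k), pow_nonneg hq0 k]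
    have h2 : |qPoch q (q ^ k * x) i| ≤ (1 + |x|) ^ i := abs_qPoch_le hq0 hq1.le h1 i
    calc |qPoch q (q ^ k * x) i| * (q ^ k * |x|) ≤ (1 + |x|) ^ i * (q ^ k * |x|) := by
          apply mul_le_mul_of_nonneg_right h2 (by positivity)
      _ = (1 + |x|) ^ i * |x| * q ^ k := by ring

lemma one_sub_pow_ne {q : ℝ} (hq0 : 0 < q) (hq1 : q < 1) (i : ℕ) : (1 : ℝ) - q ^ (i+1) ≠ 0 := by
  have : q ^ (i+1) < 1 := pow_lt_one₀ hq0.le hq1 (Nat.succ_ne_zero i)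
  linarith

lemma hasSum_step {q : ℝ} (hq0 : 0 < q) (hq1 : q < 1) (x : ℝ) (i : ℕ) :
    HasSum (fun k : ℕ => qPoch q (q ^ k * x) i * (q ^ k * x))
      ((1 - qPoch q (x / q) (i+1)) * (q / (1 - q ^ (i+1)))) := by
  have hqne : q ≠ 0 := hq0.ne'
  have hne := one_sub_pow_ne hq0 hq1 i
  set F : ℕ → ℝ := fun k => qPoch q (q ^ k * (x / q)) (i+1) with hF
  have hdiff : ∀ k, F (k+1) - F k = qPoch q (q ^ k * x) i * (q ^ k * x) * ((1 - q ^ (i+1)) / q) := by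
    intro k
    have h1 : q ^ (k+1) * (x / q) = q * (q ^ k * (x / q)) := by ring
    have h2 : q * (q ^ k * (x / q)) = q ^ k * x := by field_simp
    rw [hF]
    simp only [h1]
    rw [qPoch_diff, h2]
    field_simp
  have hsummable : Summable (fun k => F (k+1) - F k) := by
    apply Summable.congr (((summable_aux hq0.le hq1 x i).mul_right ((1 - q ^ (i+1)) / q)))
    intro k; exact (hdiff k).symm
  have htel : HasSum (fun k => F (k+1) - F k) (1 - F 0) := by
    rw [hsummable.hasSum_iff_tendsto_nat]
    have : ∀ n, ∑ k ∈ Finset.range n, (F (k+1) - F k) = F n - F 0 :=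
      fun n => Finset.sum_range_sub F n
    simp only [this]
    exact (tendsto_qPoch hq0.le hq1 (x / q) (i+1)).sub_const (F 0)
  have h2 : HasSum (fun k => (F (k+1) - F k) * (q / (1 - q ^ (i+1))))
      ((1 - F 0) * (q / (1 - q ^ (i+1)))) := htel.mul_right _
  have hF0 : F 0 = qPoch q (x / q) (i+1) := by simp [hF]
  rw [hF0] at h2
  have key : ∀ k, (F (k+1) - F k) * (q / (1 - q ^ (i+1))) = qPoch q (q ^ k * x) i * (q ^ k * x) := by
    intro k; rw [hdiff]; field_simp
  simp only [key] at h2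
  exact h2

lemma hasSum_S {q : ℝ} (hq0 : 0 < q) (hq1 : q < 1) (x : ℝ) (i : ℕ) :
    HasSum (fun k : ℕ => 1 - qPoch q (q ^ k * x) i)
      (∑ l ∈ Finset.Icc 1 i, (1 - qPoch q (x / q) l) * (q ^ l / (1 - q ^ l))) := by
  induction i with
  | zero =>
    simp only [qPoch]
    simp [hasSum_zero]
  | succ i ih =>
    have hne := one_sub_pow_ne hq0 hq1 i
    have h1 : ∀ k : ℕ, 1 - qPoch q (q ^ k * x) (i+1) =
        (1 - qPoch q (q ^ k * x) i) + qPoch q (q ^ k * x) i * (q ^ k * x) * q ^ i := by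
      intro k; rw [qPoch_succ]; ring
    have h2 := (hasSum_step hq0 hq1 x i).mul_right (q ^ i)
    have h3 := ih.add h2
    rw [Finset.sum_Icc_succ_top (Nat.le_add_left 1 i)]
    have h4 : (1 - qPoch q (x / q) (i+1)) * (q / (1 - q ^ (i+1))) * q ^ i =
        (1 - qPoch q (x / q) (i+1)) * (q ^ (i+1) / (1 - q ^ (i+1))) := by
      rw [pow_succ]; ring
    rw [h4] at h3
    exact h3.congr_fun fun k => h1 k

lemma hPoly_zero (l : List ℝ) : hPoly l 0 = 1 := by cases l <;> simp [hPoly]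

lemma hPoly_nil (k : ℕ) : hPoly [] (k+1) = 0 := by simp [hPoly]

lemma hPoly_cons (a : ℝ) (as : List ℝ) (k : ℕ) :
    hPoly (a :: as) (k + 1) = a * hPoly (a :: as) k + hPoly as (k + 1) := by
  simp [hPoly]

lemma varList_cons (f : ℕ → ℝ) {l n : ℕ} (hl : l ≤ n) :
    varList f l n = f l :: varList f (l+1) n := by
  unfold varList
  have h1 : n + 1 - l = (n - l) + 1 := by omega
  have h2 : n + 1 - (l + 1) = n - l := by omega
  rw [h1, h2, List.range_succ_eq_map]
  simp [List.map_map, Function.comp]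
  intro a _
  congr 1
  omega

lemma varList_nil (f : ℕ → ℝ) {l n : ℕ} (hl : n < l) : varList f l n = [] := by
  unfold varList
  have : n + 1 - l = 0 := by omega
  rw [this]
  simp

lemma hPoly_sum (f : ℕ → ℝ) (m n l : ℕ) (hl : l ≤ n) :
    ∑ i ∈ Finset.Icc l n, f i * hPoly (varList f i n) m = hPoly (varList f l n) (m+1) := by
  obtain ⟨d, hd⟩ : ∃ d, n = l + d := ⟨n - l, by omega⟩
  clear hl
  induction d generalizing l with
  | zero =>
    subst hd
    simp only [Finset.Icc_self, Finset.sum_singleton]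
    rw [varList_cons f (le_refl n), varList_nil f (Nat.lt_succ_self n), hPoly_cons, hPoly_nil]
    ring
  | succ d ih =>
    have hsplit : Finset.Icc l n = insert l (Finset.Icc (l+1) n) := by
      ext a; simp only [Finset.mem_insert, Finset.mem_Icc]; omega
    have hnotmem : l ∉ Finset.Icc (l+1) n := by simp
    rw [hsplit, Finset.sum_insert hnotmem, ih (l+1) (by omega),
      varList_cons f (show l ≤ n by omega), hPoly_cons]

lemma Pq_eq {q : ℝ} (hq : q ≠ 0) (f : ℝ → ℝ) (hf0 : f 0 = 0) (x : ℝ) :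
    Pq q f x = (1 - q) * ∑' k : ℕ, f (q ^ k * x) := by
  unfold Pq jInt
  congr 1
  apply tsum_congr
  intro k
  rcases eq_or_ne x 0 with h | h
  · simp [h, hf0]
  · have hxk : q ^ k * x ≠ 0 := mul_ne_zero (pow_ne_zero k hq) h
    field_simp

lemma sum_swap_Icc (n : ℕ) (F : ℕ → ℕ → ℝ) :
    ∑ i ∈ Finset.Icc 1 n, ∑ l ∈ Finset.Icc 1 i, F i l
      = ∑ l ∈ Finset.Icc 1 n, ∑ i ∈ Finset.Icc l n, F i l := by
  have h1 : ∀ i ∈ Finset.Icc 1 n, ∑ l ∈ Finset.Icc 1 i, F i l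
      = ∑ l ∈ Finset.Icc 1 n, if l ≤ i then F i l else 0 := by
    intro i hi
    rw [← Finset.sum_filter]
    apply Finset.sum_congr ?_ fun _ _ => rfl
    rw [Finset.mem_Icc] at hi
    ext a; simp only [Finset.mem_filter, Finset.mem_Icc]; omega
  rw [Finset.sum_congr rfl h1, Finset.sum_comm]
  apply Finset.sum_congr rfl
  intro l hl
  rw [← Finset.sum_filter]
  apply (Finset.sum_congr ?_ fun _ _ => rfl).symm
  rw [Finset.mem_Icc] at hl
  ext a; simp only [Finset.mem_filter, Finset.mem_Icc]; omega

lemma zpow_div_q {q : ℝ} (hq : q ≠ 0) (x : ℝ) (z : ℤ) :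
    (x * q ^ z) / q = x * q ^ (z - 1) := by
  rw [mul_div_assoc, div_eq_mul_inv, ← zpow_sub_one₀ hq]

lemma main_aux {q : ℝ} (hq0 : 0 < q) (hq1 : q < 1) (n : ℕ) :
    ∀ m : ℕ, ∀ x : ℝ, (Pq q)^[m+1] (fun t => 1 - qPoch q t n) x =
      (1 - q) ^ (m+1) * ∑ i ∈ Finset.Icc 1 n,
        (1 - qPoch q (x * q ^ (-(m:ℤ) - 1)) i) * (q ^ i / (1 - q ^ i)) *
          hPoly (varList (fun j => q ^ j / (1 - q ^ j)) i n) m := by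
  have hqne : q ≠ 0 := hq0.ne'
  intro m
  induction m with
  | zero =>
    intro x
    rw [Function.iterate_one]
    rw [Pq_eq hqne _ (by simp [qPoch_zero_left]) x]
    rw [(hasSum_S hq0 hq1 x n).tsum_eq]
    have hxq : x / q = x * q ^ (-(0:ℤ) - 1) := by
      rw [show (-(0:ℤ) - 1) = -1 by ring, zpow_neg, zpow_one, div_eq_mul_inv]
    simp only [hPoly_zero, mul_one, pow_one, hxq]
    norm_num
  | succ m ih =>
    intro x
    rw [Function.iterate_succ_apply']
    have hg : (Pq q)^[m+1] (fun t => 1 - qPoch q t n) = fun z =>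
        (1 - q) ^ (m+1) * ∑ i ∈ Finset.Icc 1 n,
          (1 - qPoch q (z * q ^ (-(m:ℤ) - 1)) i) * (q ^ i / (1 - q ^ i)) *
            hPoly (varList (fun j => q ^ j / (1 - q ^ j)) i n) m := funext ih
    rw [hg]
    rw [Pq_eq hqne _ (by simp [qPoch_zero_left]) x]
    set y := x * q ^ (-(m:ℤ) - 1) with hy
    have harg : ∀ k : ℕ, q ^ k * x * q ^ (-(m:ℤ) - 1) = q ^ k * y := by
      intro k; rw [hy]; ring
    simp only [harg]
    rw [tsum_mul_left]
    rw [Summable.tsum_finsetSum (fun i _ => (((hasSum_S hq0 hq1 y i).summable.mul_right _).mul_right _))]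
    have heach : ∀ i ∈ Finset.Icc 1 n,
        (∑' k : ℕ, (1 - qPoch q (q ^ k * y) i) * (q ^ i / (1 - q ^ i)) *
          hPoly (varList (fun j => q ^ j / (1 - q ^ j)) i n) m)
        = ∑ l ∈ Finset.Icc 1 i, ((1 - qPoch q (y / q) l) * (q ^ l / (1 - q ^ l))) *
            ((q ^ i / (1 - q ^ i)) * hPoly (varList (fun j => q ^ j / (1 - q ^ j)) i n) m) := by
      intro i _
      rw [show (fun k : ℕ => (1 - qPoch q (q ^ k * y) i) * (q ^ i / (1 - q ^ i)) *
          hPoly (varList (fun j => q ^ j / (1 - q ^ j)) i n) m)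
        = fun k : ℕ => (1 - qPoch q (q ^ k * y) i) * ((q ^ i / (1 - q ^ i)) *
          hPoly (varList (fun j => q ^ j / (1 - q ^ j)) i n) m) from funext fun k => by ring]
      rw [tsum_mul_right, (hasSum_S hq0 hq1 y i).tsum_eq, Finset.sum_mul]
    rw [Finset.sum_congr rfl heach, sum_swap_Icc]
    have hcol : ∀ l ∈ Finset.Icc 1 n,
        (∑ i ∈ Finset.Icc l n, ((1 - qPoch q (y / q) l) * (q ^ l / (1 - q ^ l))) *
          ((q ^ i / (1 - q ^ i)) * hPoly (varList (fun j => q ^ j / (1 - q ^ j)) i n) m))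
        = (1 - qPoch q (y / q) l) * (q ^ l / (1 - q ^ l)) *
            hPoly (varList (fun j => q ^ j / (1 - q ^ j)) l n) (m+1) := by
      intro l hl
      rw [Finset.mem_Icc] at hl
      rw [← Finset.mul_sum, hPoly_sum _ m n l hl.2]
    rw [Finset.sum_congr rfl hcol]
    have hyq : y / q = x * q ^ (-((m:ℤ)+1) - 1) := by
      rw [hy, zpow_div_q hqne]
      ring_nf
    rw [hyq]
    rw [← mul_assoc, ← pow_succ']
    norm_num

end Lemmas

/-- `(P_q)^m (1-(x;q)_n)`, with the convention that for `m = 0` the right-hand side is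
`1 - (x;q)_n` itself. -/
theorem Pq_iterate_poch (q : ℝ) (hq0 : 0 < q) (hq1 : q < 1) (m n : ℕ) (hn : 0 < n) (x : ℝ) :
    (Pq q)^[m] (fun t => 1 - qPoch q t n) x =
      if m = 0 then 1 - qPoch q x n
      else (1 - q) ^ m * ∑ i ∈ Finset.Icc 1 n,
        (1 - qPoch q (x * q ^ (-(m : ℤ))) i) * (q ^ i / (1 - q ^ i)) *
          hPoly (varList (fun j => q ^ j / (1 - q ^ j)) i n) (m - 1) := by
  cases m with
  | zero => simp
  | succ m =>
    rw [if_neg (Nat.succ_ne_zero m)]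
    have h := main_aux hq0 hq1 n m x
    have hcast : (-((m + 1 : ℕ) : ℤ)) = -(m : ℤ) - 1 := by push_cast; ring
    rw [Nat.add_sub_cancel, hcast]
    exact h
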